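/- There is a constant C such that for all n ≥ 2, |∑_{m=1}^{n} φ(m)/m − (6/π²)·n| ≤ C·log n. -/

import Mathlib

open Real

section TotientAux

open Finset ArithmeticFunction

private lemma totientAux_hasSum :
    HasSum (fun d : ℕ => (moebius d : ℝ) / d ^ 2) (6 / π ^ 2) := by
  have h2 : (1:ℝ) < (2:ℂ).re := by norm_num
  have hsummable : LSeriesSummable (fun n => (moebius n : ℂ)) 2 :=
    LSeriesSummable_moebius_iff.mpr h2
  have hmul := LSeries_zeta_mul_Lseries_moebius (s := 2) h2
  rw [LSeries_zeta_eq_riemannZeta h2, riemannZeta_two] at hmul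
  have hpi : ((π:ℂ))^2 ≠ 0 := by
    simpa using Complex.ofReal_ne_zero.mpr Real.pi_ne_zero
  have hL : LSeries (fun n => (moebius n : ℂ)) 2 = 6 / (π:ℂ)^2 := by
    field_simp at hmul ⊢
    linear_combination hmul
  have hs : HasSum (LSeries.term (fun n => (moebius n : ℂ)) 2)
      (LSeries (fun n => (moebius n : ℂ)) 2) := hsummable.hasSum
  rw [hL] at hs
  have hre := Complex.reCLM.hasSum hs
  have hterm : (fun d => Complex.reCLM (LSeries.term (fun n => (moebius n : ℂ)) 2 d))
      = fun d : ℕ => (moebius d : ℝ) / d ^ 2 := by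
    funext d
    rcases Nat.eq_zero_or_pos d with rfl | hd
    · simp [LSeries.term]
    · rw [LSeries.term_of_ne_zero hd.ne', show (2:ℂ) = ((2:ℕ):ℂ) by norm_num,
        Complex.cpow_natCast]
      have h' : ((moebius d : ℂ)) / (d:ℂ)^(2:ℕ) = (((moebius d : ℝ) / d ^ 2 : ℝ) : ℂ) := by
        push_cast; ring
      simp only [Complex.reCLM_apply, h', Complex.ofReal_re]
  have hval : Complex.reCLM (6/(π:ℂ)^2) = 6 / π^2 := by
    have h' : (6/(π:ℂ)^2) = (((6/π^2 : ℝ)) : ℂ) := by push_cast; ring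
    simp only [Complex.reCLM_apply, h', Complex.ofReal_re]
  rw [hterm, hval] at hre
  exact hre

private lemma totientAux_tailsq (n : ℕ) (hn : 1 ≤ n) :
    ∑' k : ℕ, (1:ℝ) / (((k + n + 1 : ℕ)):ℝ) ^ 2 ≤ 1 / n := by
  have hsum : Summable (fun k : ℕ => (1:ℝ) / (((k + n + 1 : ℕ)):ℝ) ^ 2) := by
    have := (Real.summable_one_div_nat_pow (p := 2)).mpr one_lt_two
    have h2 := (summable_nat_add_iff (n + 1)).mpr this
    apply h2.congr
    intro k; push_cast; ring_nf
  refine Summable.tsum_le_of_sum_le hsum ?_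
  intro s
  obtain ⟨N, hN⟩ := s.exists_nat_subset_range
  calc ∑ k ∈ s, (1:ℝ) / (((k + n + 1 : ℕ)):ℝ) ^ 2
      ≤ ∑ k ∈ range N, (1:ℝ) / (((k + n + 1 : ℕ)):ℝ) ^ 2 := by
        apply sum_le_sum_of_subset_of_nonneg hN
        intros; positivity
    _ = ∑ i ∈ Ioc n (n + N), (((i:ℝ)) ^ 2)⁻¹ := by
        rw [← Finset.Ico_add_one_add_one_eq_Ioc, Finset.sum_Ico_eq_sum_range]
        apply Finset.sum_congr (by congr 1; omega)
        intro k _; push_cast; ring_nf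
    _ ≤ (n:ℝ)⁻¹ - ((n + N : ℕ):ℝ)⁻¹ := by
        simpa [one_div] using sum_Ioc_inv_sq_le_sub (α := ℝ) (k := n) (n := n + N)
          (by omega) (by omega)
    _ ≤ 1 / n := by
        rw [one_div]
        have : (0:ℝ) ≤ ((n + N : ℕ):ℝ)⁻¹ := by positivity
        linarith

private lemma totientAux_tail (n : ℕ) (hn : 1 ≤ n) :
    |6 / π ^ 2 - ∑ d ∈ Icc 1 n, (moebius d : ℝ) / d ^ 2| ≤ 1 / (n:ℝ) := by
  have hs := totientAux_hasSum
  have hsummable := hs.summable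
  have htsum : ∑' d : ℕ, (moebius d : ℝ) / d ^ 2 = 6 / π ^ 2 := hs.tsum_eq
  have hsplit := Summable.sum_add_tsum_nat_add (f := fun d : ℕ => (moebius d : ℝ) / d ^ 2)
    (n + 1) hsummable
  have hrange : ∑ d ∈ range (n + 1), (moebius d : ℝ) / d ^ 2
      = ∑ d ∈ Icc 1 n, (moebius d : ℝ) / d ^ 2 := by
    rw [← Nat.Ico_zero_eq_range, ← Finset.Ico_add_one_right_eq_Icc,
      Finset.sum_eq_sum_Ico_succ_bot (by omega)]
    simp
  have heq : 6 / π ^ 2 - ∑ d ∈ Icc 1 n, (moebius d : ℝ) / d ^ 2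
      = ∑' k : ℕ, (moebius (k + (n + 1)) : ℝ) / (k + (n + 1) : ℕ) ^ 2 := by
    rw [← hrange, ← htsum, ← hsplit]; push_cast; ring
  rw [heq]
  have hmaj : ∀ k : ℕ, |(moebius (k + (n + 1)) : ℝ) / (k + (n + 1) : ℕ) ^ 2|
      ≤ (1:ℝ) / (((k + n + 1 : ℕ)):ℝ) ^ 2 := by
    intro k
    have hidx : k + (n + 1) = k + n + 1 := by omega
    rw [hidx, abs_div,
      abs_of_nonneg (by positivity : (0:ℝ) ≤ ((k + n + 1 : ℕ):ℝ) ^ 2)]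
    gcongr
    exact_mod_cast ArithmeticFunction.abs_moebius_le_one (n := k + n + 1)
  have hsummaj : Summable (fun k : ℕ => (1:ℝ) / (((k + n + 1 : ℕ)):ℝ) ^ 2) := by
    have := (Real.summable_one_div_nat_pow (p := 2)).mpr one_lt_two
    have h2 := (summable_nat_add_iff (n + 1)).mpr this
    apply h2.congr
    intro k; push_cast; ring_nf
  have hsumf : Summable
      (fun k : ℕ => |(moebius (k + (n + 1)) : ℝ) / (k + (n + 1) : ℕ) ^ 2|) :=
    hsummaj.of_nonneg_of_le (fun k => abs_nonneg _) hmaj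
  calc |∑' k : ℕ, (moebius (k + (n + 1)) : ℝ) / (k + (n + 1) : ℕ) ^ 2|
      ≤ ∑' k : ℕ, |(moebius (k + (n + 1)) : ℝ) / (k + (n + 1) : ℕ) ^ 2| := by
        simpa only [Real.norm_eq_abs] using norm_tsum_le_tsum_norm
          (f := fun k : ℕ => (moebius (k + (n + 1)) : ℝ) / (k + (n + 1) : ℕ) ^ 2)
          (by simpa only [Real.norm_eq_abs] using hsumf)
    _ ≤ ∑' k : ℕ, (1:ℝ) / (((k + n + 1 : ℕ)):ℝ) ^ 2 := Summable.tsum_le_tsum hmaj hsumf hsummaj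
    _ ≤ 1 / n := totientAux_tailsq n hn

private lemma totientAux_div (m : ℕ) (hm : 1 ≤ m) :
    (Nat.totient m : ℝ) / m = ∑ d ∈ m.divisors, (moebius d : ℝ) / d := by
  have key := (sum_eq_iff_sum_mul_moebius_eq (R := ℝ)
    (f := fun i => (Nat.totient i : ℝ)) (g := fun i => (i : ℝ))).mp ?_ m hm
  · have hm0 : (m:ℝ) ≠ 0 := by positivity
    rw [div_eq_iff hm0, ← key,
      Nat.sum_divisorsAntidiagonal (f := fun d e => (moebius d : ℝ) * e),
      Finset.sum_mul]
    apply Finset.sum_congr rfl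
    intro d hd
    have hd0 : (d:ℝ) ≠ 0 := by
      have := Nat.pos_of_mem_divisors hd; positivity
    rw [Nat.cast_div (Nat.mem_divisors.mp hd).1 hd0]
    field_simp
  · intro k hk
    rw [← Nat.cast_sum]
    norm_cast
    exact Nat.sum_totient k

private lemma totientAux_swap (g : ℕ → ℝ) (n : ℕ) :
    ∑ m ∈ Icc 1 n, ∑ d ∈ Nat.divisors m, g d
      = ∑ d ∈ Icc 1 n, ((n / d : ℕ) : ℝ) * g d := by
  have hIcc : Icc 1 n = Ioc 0 n := by rw [← Finset.Icc_add_one_left_eq_Ioc, zero_add]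
  rw [hIcc]
  have step1 : ∀ m ∈ Ioc 0 n, ∑ d ∈ Nat.divisors m, g d
      = ∑ d ∈ Ioc 0 n, if d ∣ m then g d else 0 := by
    intro m hm
    rw [mem_Ioc] at hm
    rw [← Finset.sum_filter]
    apply Finset.sum_congr _ (fun _ _ => rfl)
    ext d
    simp only [Nat.mem_divisors, Finset.mem_filter, mem_Ioc]
    constructor
    · rintro ⟨hdvd, hm0⟩
      exact ⟨⟨Nat.pos_of_dvd_of_pos hdvd hm.1, le_trans (Nat.le_of_dvd hm.1 hdvd) hm.2⟩, hdvd⟩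
    · rintro ⟨_, hdvd⟩
      exact ⟨hdvd, hm.1.ne'⟩
  rw [Finset.sum_congr rfl step1, Finset.sum_comm]
  apply Finset.sum_congr rfl
  intro d _
  rw [← Finset.sum_filter, Finset.sum_const, ← Nat.Ioc_filter_dvd_card_eq_div]
  simp [mul_comm]

end TotientAux

theorem totient_sum_asymptotic :
    ∃ C : ℝ, ∀ n : ℕ, 2 ≤ n →
      |(∑ m ∈ Finset.Icc 1 n, (Nat.totient m : ℝ) / m) - (6 / π ^ 2) * n| ≤
        C * Real.log n := by
  classical
  refine ⟨4, fun n hn => ?_⟩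
  set μ := ArithmeticFunction.moebius
  have hn1 : 1 ≤ n := by omega
  -- Step 1: rewrite the sum
  have hS : (∑ m ∈ Finset.Icc 1 n, (Nat.totient m : ℝ) / m)
      = ∑ d ∈ Finset.Icc 1 n, ((n / d : ℕ) : ℝ) * ((μ d : ℝ) / d) := by
    rw [Finset.sum_congr rfl (fun m hm =>
      totientAux_div m (Finset.mem_Icc.mp hm).1)]
    exact totientAux_swap (fun d => (μ d : ℝ) / d) n
  set A : ℝ := ∑ d ∈ Finset.Icc 1 n, (μ d : ℝ) / d ^ 2 with hA
  have key : (∑ m ∈ Finset.Icc 1 n, (Nat.totient m : ℝ) / m) - (6 / π ^ 2) * n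
      = (∑ d ∈ Finset.Icc 1 n,
          (((n / d : ℕ) : ℝ) * ((μ d : ℝ) / d) - (n:ℝ) * ((μ d : ℝ) / d ^ 2)))
        - (n:ℝ) * (6 / π ^ 2 - A) := by
    rw [hS, Finset.sum_sub_distrib, ← Finset.mul_sum, ← hA]
    ring
  rw [key]
  -- Step 2: per-term bound
  have hterm : ∀ d ∈ Finset.Icc 1 n,
      |((n / d : ℕ) : ℝ) * ((μ d : ℝ) / d) - (n:ℝ) * ((μ d : ℝ) / d ^ 2)| ≤ 1 / d := by
    intro d hd
    obtain ⟨hd1, hdn⟩ := Finset.mem_Icc.mp hd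
    have hd0 : (0:ℝ) < d := by exact_mod_cast hd1
    have hfactor : ((n / d : ℕ) : ℝ) * ((μ d : ℝ) / d) - (n:ℝ) * ((μ d : ℝ) / d ^ 2)
        = ((μ d : ℝ) / d) * (((n / d : ℕ) : ℝ) - (n:ℝ) / d) := by
      field_simp
    rw [hfactor, abs_mul]
    have h1 : |(μ d : ℝ) / d| ≤ 1 / d := by
      rw [abs_div, abs_of_pos hd0]
      have hmu : |(μ d : ℝ)| ≤ 1 := by
        exact_mod_cast ArithmeticFunction.abs_moebius_le_one (n := d)
      gcongr
    have h2 : |((n / d : ℕ) : ℝ) - (n:ℝ) / d| ≤ 1 := by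
      have hcast : (d:ℝ) * ((n / d : ℕ) : ℝ) + ((n % d : ℕ) : ℝ) = (n:ℝ) := by
        exact_mod_cast congrArg (Nat.cast : ℕ → ℝ) (Nat.div_add_mod n d)
      have hmodlt : ((n % d : ℕ) : ℝ) < d := by
        exact_mod_cast Nat.mod_lt n (by omega)
      have hmodnn : (0:ℝ) ≤ ((n % d : ℕ) : ℝ) := by positivity
      rw [abs_le]
      constructor
      · have hle : (n:ℝ) / d ≤ ((n / d : ℕ) : ℝ) + 1 := by
          rw [div_le_iff₀ hd0]; nlinarith
        linarith
      · have hge : ((n / d : ℕ) : ℝ) ≤ (n:ℝ) / d := Nat.cast_div_le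
        linarith
    calc |(μ d : ℝ) / d| * |((n / d : ℕ) : ℝ) - (n:ℝ) / d| ≤ (1/d) * 1 := by
          apply mul_le_mul h1 h2 (abs_nonneg _) (by positivity)
      _ = 1 / d := by ring
  -- Step 3: assemble
  have hharm : ∑ d ∈ Finset.Icc 1 n, (1:ℝ) / d ≤ 1 + Real.log n := by
    have h := harmonic_le_one_add_log n
    rw [harmonic_eq_sum_Icc] at h
    push_cast at h
    simpa [one_div] using h
  have htail := totientAux_tail n hn1
  have hlog2 : (0.6931471803 : ℝ) < Real.log 2 := Real.log_two_gt_d9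
  have hlogn : Real.log 2 ≤ Real.log n := by
    apply Real.log_le_log (by norm_num)
    exact_mod_cast hn
  calc |(∑ d ∈ Finset.Icc 1 n,
          (((n / d : ℕ) : ℝ) * ((μ d : ℝ) / d) - (n:ℝ) * ((μ d : ℝ) / d ^ 2)))
        - (n:ℝ) * (6 / π ^ 2 - A)|
      ≤ |∑ d ∈ Finset.Icc 1 n,
          (((n / d : ℕ) : ℝ) * ((μ d : ℝ) / d) - (n:ℝ) * ((μ d : ℝ) / d ^ 2))|
        + |(n:ℝ) * (6 / π ^ 2 - A)| := abs_sub _ _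
    _ ≤ (∑ d ∈ Finset.Icc 1 n, (1:ℝ) / d) + (n:ℝ) * (1 / n) := by
        apply add_le_add
        · exact (Finset.abs_sum_le_sum_abs _ _).trans (Finset.sum_le_sum hterm)
        · rw [abs_mul, abs_of_nonneg (by positivity : (0:ℝ) ≤ (n:ℝ))]
          apply mul_le_mul_of_nonneg_left htail (by positivity)
    _ ≤ (1 + Real.log n) + 1 := by
        have hn0 : (0:ℝ) < n := by exact_mod_cast hn1
        rw [mul_one_div, div_self hn0.ne']
        linarith
    _ ≤ 4 * Real.log n := by linarith
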